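/- For all n ≥ 1, every down-up permutation σ of length 2n+1 satisfies mmp^{(1,0,0,0)}(σ) ≥ n, and the number of down-up permutations of length 2n+1 with mmp^{(1,0,0,0)}(σ) = n is exactly (2n-1)!!. -/

import Mathlib

open Finset

/-- Number of indices `i` such that there exists `j > i` with `σ j > σ i`
    (the statistic mmp^{(1,0,0,0)}). -/
noncomputable def mmp1000 {n : ℕ} (σ : Equiv.Perm (Fin n)) : ℕ :=
  (Finset.univ.filter (fun i : Fin n => ∃ j : Fin n, i < j ∧ σ i < σ j)).card

/-- Number of indices `i` such that there exists `j < i` with `σ j > σ i`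
    (the statistic mmp^{(0,1,0,0)}). -/
noncomputable def mmp0100 {n : ℕ} (σ : Equiv.Perm (Fin n)) : ℕ :=
  (Finset.univ.filter (fun i : Fin n => ∃ j : Fin n, j < i ∧ σ i < σ j)).card

/-- Number of indices `i` such that there exists `j > i` with `σ j < σ i`
    (the statistic mmp^{(0,0,0,1)}). -/
noncomputable def mmp0001 {n : ℕ} (σ : Equiv.Perm (Fin n)) : ℕ :=
  (Finset.univ.filter (fun i : Fin n => ∃ j : Fin n, i < j ∧ σ j < σ i)).card

/-- σ is up-down: σ(1) < σ(2) > σ(3) < σ(4) > ⋯ (0-indexed: ascent at even indices). -/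
def IsUpDown {n : ℕ} (σ : Equiv.Perm (Fin n)) : Prop :=
  ∀ i : Fin n, ∀ h : (i : ℕ) + 1 < n,
    if (i : ℕ) % 2 = 0 then σ i < σ ⟨(i : ℕ) + 1, h⟩ else σ ⟨(i : ℕ) + 1, h⟩ < σ i

/-- σ is down-up: σ(1) > σ(2) < σ(3) > σ(4) < ⋯ (0-indexed: descent at even indices). -/
def IsDownUp {n : ℕ} (σ : Equiv.Perm (Fin n)) : Prop :=
  ∀ i : Fin n, ∀ h : (i : ℕ) + 1 < n,
    if (i : ℕ) % 2 = 0 then σ ⟨(i : ℕ) + 1, h⟩ < σ i else σ i < σ ⟨(i : ℕ) + 1, h⟩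

open scoped Classical in
/-- The set of up-down permutations of length `m`. -/
noncomputable def UDset (m : ℕ) : Finset (Equiv.Perm (Fin m)) :=
  Finset.univ.filter (fun σ => IsUpDown σ)

open scoped Classical in
/-- The set of down-up permutations of length `m`. -/
noncomputable def DUset (m : ℕ) : Finset (Equiv.Perm (Fin m)) :=
  Finset.univ.filter (fun σ => IsDownUp σ)

/-- The reverse of σ: σ^r(i) = σ(n+1-i). -/
def permReverse {n : ℕ} (σ : Equiv.Perm (Fin n)) : Equiv.Perm (Fin n) :=
  Fin.revPerm.trans σ

/-- The complement of σ: σ^c(i) = n+1-σ(i). -/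
def permComplement {n : ℕ} (σ : Equiv.Perm (Fin n)) : Equiv.Perm (Fin n) :=
  σ.trans Fin.revPerm

/-- A_{2n}(x) = Σ_{σ ∈ UD_{2n}} x^{mmp^{(1,0,0,0)}(σ)}. -/
noncomputable def Apoly (n : ℕ) (x : ℤ) : ℤ :=
  ∑ σ ∈ UDset (2 * n), x ^ mmp1000 σ

/-- B_{2n+1}(x) = Σ_{σ ∈ UD_{2n+1}} x^{mmp^{(1,0,0,0)}(σ)}. -/
noncomputable def Bpoly (n : ℕ) (x : ℤ) : ℤ :=
  ∑ σ ∈ UDset (2 * n + 1), x ^ mmp1000 σ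

/-- C_{2n}(x) = Σ_{σ ∈ DU_{2n}} x^{mmp^{(1,0,0,0)}(σ)}. -/
noncomputable def Cpoly (n : ℕ) (x : ℤ) : ℤ :=
  ∑ σ ∈ DUset (2 * n), x ^ mmp1000 σ

/-- D_{2n+1}(x) = Σ_{σ ∈ DU_{2n+1}} x^{mmp^{(1,0,0,0)}(σ)}. -/
noncomputable def Dpoly (n : ℕ) (x : ℤ) : ℤ :=
  ∑ σ ∈ DUset (2 * n + 1), x ^ mmp1000 σ

/-- Number of up-down permutations of length m. -/
noncomputable def udCount (m : ℕ) : ℕ := (UDset m).card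

/-- Number of down-up permutations of length m. -/
noncomputable def duCount (m : ℕ) : ℕ := (DUset m).card

open scoped Classical in
/-- |{σ ∈ UD_{2m} : mmp^{(1,0,0,0)}(σ) = c}|. -/
noncomputable def AcountEq (m c : ℕ) : ℕ :=
  ((UDset (2 * m)).filter (fun σ => mmp1000 σ = c)).card

open scoped Classical in
/-- |{σ ∈ DU_{2m+1} : mmp^{(1,0,0,0)}(σ) = c}|. -/
noncomputable def DcountEq (m c : ℕ) : ℕ :=
  ((DUset (2 * m + 1)).filter (fun σ => mmp1000 σ = c)).card

open scoped Classical in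
/-- |{σ ∈ UD_{2m+1} : mmp^{(1,0,0,0)}(σ) = c}|. -/
noncomputable def BcountEq (m c : ℕ) : ℕ :=
  ((UDset (2 * m + 1)).filter (fun σ => mmp1000 σ = c)).card

open scoped Classical in
/-- |{σ ∈ DU_{2m} : mmp^{(1,0,0,0)}(σ) = c}|. -/
noncomputable def CcountEq (m c : ℕ) : ℕ :=
  ((DUset (2 * m)).filter (fun σ => mmp1000 σ = c)).card

def Good (n : ℕ) (σ : Equiv.Perm (Fin (2*n+1))) : Prop :=
  ∀ k : ℕ, ∀ hk : k < n,
    σ ⟨2*k+1, by omega⟩ < σ ⟨2*k+2, by omega⟩ ∧ σ ⟨2*k+2, by omega⟩ < σ ⟨2*k, by omega⟩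

/-- every even position is a strict suffix maximum -/
lemma Good.master {n : ℕ} {σ : Equiv.Perm (Fin (2*n+1))} (h : Good n σ) :
    ∀ J : ℕ, ∀ hJ : J < 2*n+1, ∀ i : ℕ, ∀ hi : i < J, i % 2 = 0 →
      σ ⟨J, hJ⟩ < σ ⟨i, by omega⟩ := by
  intro J
  induction J using Nat.strong_induction_on with
  | _ J IH =>
    intro hJ i hi hie
    obtain ⟨k, rfl⟩ : ∃ k, i = 2*k := ⟨i/2, by omega⟩
    rcases Nat.even_or_odd J with ⟨m, hm⟩ | ⟨m, hm⟩
    · subst hm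
      have hm1 : m ≥ k + 1 := by omega
      have hmn : m ≤ n := by omega
      have h1 : σ ⟨m+m, hJ⟩ < σ ⟨2*(m-1), by omega⟩ := by
        have := (h (m-1) (by omega)).2
        have e : 2*(m-1)+2 = m + m := by omega
        convert this using 3 <;> omega
      rcases Nat.eq_or_lt_of_le hm1 with heq | hlt
      · have e : 2*(m-1) = 2*k := by omega
        convert h1 using 3 <;> omega
      · exact h1.trans (IH (2*(m-1)) (by omega) (by omega) (2*k) (by omega) (by omega))
    · subst hm
      have hmn : m < n := by omega
      have h1 : σ ⟨2*m+1, hJ⟩ < σ ⟨2*m, by omega⟩ :=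
        lt_trans (h m hmn).1 (h m hmn).2
      rcases Nat.eq_or_lt_of_le (show k ≤ m by omega) with heq | hlt
      · subst heq; exact h1
      · exact h1.trans (IH (2*m) (by omega) (by omega) (2*k) (by omega) (by omega))

lemma Good.isDownUp {n : ℕ} {σ : Equiv.Perm (Fin (2*n+1))} (h : Good n σ) : IsDownUp σ := by
  intro i hi
  rcases Nat.even_or_odd (i:ℕ) with ⟨k, hk⟩ | ⟨k, hk⟩
  · have hkn : k < n := by omega
    have : (i:ℕ) % 2 = 0 := by omega
    rw [if_pos this]
    have := lt_trans (h k hkn).1 (h k hkn).2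
    convert this using 3
    · rfl
    all_goals omega
  · have hkn : k < n := by omega
    have : ¬ (i:ℕ) % 2 = 0 := by omega
    rw [if_neg this]
    have := (h k hkn).1
    convert this using 3 <;> omega
open scoped Classical in
noncomputable def Odds (n : ℕ) : Finset (Fin (2*n+1)) :=
  Finset.univ.filter (fun i => (i:ℕ) % 2 = 1)

lemma Odds_eq (n : ℕ) : Odds n =
    Finset.univ.map ⟨fun k : Fin n => (⟨2*(k:ℕ)+1, by omega⟩ : Fin (2*n+1)),
      by intro a b hab; simp [Fin.ext_iff] at hab ⊢; omega⟩ := by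
  classical
  ext i
  simp [Odds, Fin.ext_iff]
  constructor
  · intro hi
    refine ⟨⟨((i:ℕ)-1)/2, by omega⟩, ?_⟩
    show 2*(((i:ℕ)-1)/2)+1 = (i:ℕ)
    omega
  · rintro ⟨k, hk⟩
    have := k.isLt
    change 2*(k:ℕ)+1 = (i:ℕ) at hk
    omega

lemma Odds_card (n : ℕ) : (Odds n).card = n := by
  rw [Odds_eq]; simp

lemma IsDownUp.odds_subset {n : ℕ} {σ : Equiv.Perm (Fin (2*n+1))} (h : IsDownUp σ) :
    Odds n ⊆ Finset.univ.filter (fun i : Fin (2*n+1) => ∃ j : Fin (2*n+1), i < j ∧ σ i < σ j) := by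
  classical
  intro i hi
  simp [Odds] at hi
  have hlt : (i:ℕ) + 1 < 2*n+1 := by omega
  have := h i hlt
  rw [if_neg (by omega)] at this
  simp only [Finset.mem_filter, Finset.mem_univ, true_and]
  exact ⟨⟨(i:ℕ)+1, hlt⟩, by simp [Fin.lt_def], this⟩

lemma IsDownUp.mmp_ge {n : ℕ} {σ : Equiv.Perm (Fin (2*n+1))} (h : IsDownUp σ) :
    n ≤ mmp1000 σ := by
  classical
  calc n = (Odds n).card := (Odds_card n).symm
  _ ≤ _ := Finset.card_le_card h.odds_subset

lemma Good.filter_eq {n : ℕ} {σ : Equiv.Perm (Fin (2*n+1))} (h : Good n σ) :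
    Finset.univ.filter (fun i : Fin (2*n+1) => ∃ j : Fin (2*n+1), i < j ∧ σ i < σ j) = Odds n := by
  classical
  apply Finset.Subset.antisymm
  · intro i hi
    simp only [Finset.mem_filter, Finset.mem_univ, true_and] at hi
    obtain ⟨j, hij, hs⟩ := hi
    simp only [Odds, Finset.mem_filter, Finset.mem_univ, true_and]
    by_contra he
    have he' : (i:ℕ) % 2 = 0 := by omega
    have := h.master (j:ℕ) j.isLt (i:ℕ) hij he'
    simp only [Fin.eta] at this
    exact absurd hs (not_lt.mpr this.le)
  · exact h.isDownUp.odds_subset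

lemma Good.mmp_eq {n : ℕ} {σ : Equiv.Perm (Fin (2*n+1))} (h : Good n σ) :
    mmp1000 σ = n := by
  classical
  rw [mmp1000]
  rw [show (Finset.univ.filter (fun i : Fin (2*n+1) => ∃ j : Fin (2*n+1), i < j ∧ σ i < σ j)) = Odds n from h.filter_eq]
  exact Odds_card n

lemma mmp_eq_iff_good {n : ℕ} {σ : Equiv.Perm (Fin (2*n+1))} (h : IsDownUp σ) :
    mmp1000 σ = n ↔ Good n σ := by
  classical
  constructor
  · intro hm
    have hsub := h.odds_subset
    have hcard : (Finset.univ.filter (fun i : Fin (2*n+1) => ∃ j : Fin (2*n+1), i < j ∧ σ i < σ j)).card ≤ (Odds n).card := by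
      rw [Odds_card]; exact le_of_eq hm
    have heq := Finset.eq_of_subset_of_card_le hsub hcard
    intro k hk
    have p0 : 2*k < 2*n+1 := by omega
    have p1 : 2*k+1+1 < 2*n+1 := by omega
    have p2 : 2*k+2 < 2*n+1 := by omega
    have hup := h ⟨2*k+1, by omega⟩ p1
    rw [if_neg (by omega : ¬ (2*k+1) % 2 = 0)] at hup
    refine ⟨hup, ?_⟩
    have hnot : (⟨2*k, p0⟩ : Fin (2*n+1)) ∉ Odds n := by
      simp only [Odds, Finset.mem_filter, Finset.mem_univ, true_and]
      omega
    have h2 : ¬ ∃ j : Fin (2*n+1), (⟨2*k, p0⟩ : Fin (2*n+1)) < j ∧ σ ⟨2*k, p0⟩ < σ j := by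
      intro hex
      apply hnot
      rw [heq]
      exact Finset.mem_filter.mpr ⟨Finset.mem_univ _, hex⟩
    push_neg at h2
    have hle : ¬ σ ⟨2*k, p0⟩ < σ ⟨2*k+2, p2⟩ :=
      not_lt.mpr (h2 ⟨2*k+2, p2⟩ (by simp [Fin.lt_def]))
    have hne : σ ⟨2*k+2, p2⟩ ≠ σ ⟨2*k, p0⟩ := by
      intro hc
      have := σ.injective hc
      simp [Fin.ext_iff] at this
    exact lt_of_le_of_ne (not_lt.mp hle) hne
  · exact fun hg => hg.mmp_eq
open scoped Classical in
noncomputable def GS (n : ℕ) : Finset (Equiv.Perm (Fin (2*n+1))) :=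
  Finset.univ.filter (fun σ => Good n σ)

lemma Dcount_eq_GS (n : ℕ) : DcountEq n n = (GS n).card := by
  classical
  unfold DcountEq DUset GS
  rw [Finset.filter_filter]
  congr 1
  ext σ
  simp only [Finset.mem_filter, Finset.mem_univ, true_and]
  constructor
  · rintro ⟨hdu, hm⟩; exact (mmp_eq_iff_good hdu).1 hm
  · intro hg; exact ⟨hg.isDownUp, hg.mmp_eq⟩

lemma Good.apply_zero_eq_last {n : ℕ} {σ : Equiv.Perm (Fin (2*n+1))} (h : Good n σ) :
    (σ ⟨0, by omega⟩ : ℕ) = 2*n := by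
  have key : ∀ j : Fin (2*n+1), j ≠ ⟨0, by omega⟩ → σ j < σ ⟨0, by omega⟩ := by
    intro j hj
    have hj0 : (j:ℕ) ≠ 0 := fun hc => hj (Fin.ext hc)
    have := h.master (j:ℕ) j.isLt 0 (by omega) (by omega)
    simpa using this
  by_contra hne
  set j := σ.symm (Fin.last (2*n)) with hjdef
  have hσj : σ j = Fin.last (2*n) := σ.apply_symm_apply _
  have hj0 : j ≠ ⟨0, by omega⟩ := by
    intro hc
    rw [hc] at hσj
    apply hne
    rw [hσj]
    simp [Fin.last]
  have := key j hj0
  rw [hσj] at this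
  exact absurd (Fin.le_last _) (not_le.mpr this)

def PosE (n : ℕ) : Fin (2*(n+1)+1) ≃ Option (Option (Fin (2*n+1))) :=
  (finCongr (by omega : 2*(n+1)+1 = 2*n+1+1+1)).trans
    ((finSuccEquiv (2*n+1+1)).trans (Equiv.optionCongr (finSuccEquiv (2*n+1))))

def ValE (n : ℕ) (v : Fin (2*n+1)) : Fin (2*(n+1)+1) ≃ Option (Option (Fin (2*n+1))) :=
  (finCongr (by omega : 2*(n+1)+1 = (2*n+1+1)+1)).trans
    ((finSuccEquiv' (Fin.last (2*n+1+1))).trans (Equiv.optionCongr (finSuccEquiv' v.castSucc)))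

lemma succAbove_val {m : ℕ} (p : Fin (m+1)) (i : Fin m) :
    ((p.succAbove i) : ℕ) = if (i:ℕ) < (p:ℕ) then (i:ℕ) else (i:ℕ)+1 := by
  rw [Fin.succAbove, apply_ite Fin.val]
  simp only [Fin.lt_def, Fin.coe_castSucc, Fin.val_succ]

lemma PosE_symm_none (n : ℕ) : (PosE n).symm none = ⟨0, by omega⟩ := by
  simp [PosE]
  rfl

lemma PosE_symm_sn (n : ℕ) : (PosE n).symm (some none) = ⟨1, by omega⟩ := by
  simp [PosE, finSuccEquiv]
  rfl

lemma PosE_symm_ss (n : ℕ) (i : Fin (2*n+1)) :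
    (PosE n).symm (some (some i)) = ⟨(i:ℕ)+2, by omega⟩ := by
  ext
  simp only [PosE, finSuccEquiv, Equiv.symm_trans_apply, ← Equiv.optionCongr_symm,
    Equiv.optionCongr_apply, Option.map_some, finSuccEquiv'_symm_some,
    finCongr_symm, finCongr_apply, Fin.coe_cast]
  rw [succAbove_val, succAbove_val]
  simp

lemma ValE_symm_none (n : ℕ) (v : Fin (2*n+1)) :
    (ValE n v).symm none = ⟨2*n+2, by omega⟩ := by
  simp [ValE]
  rfl

lemma ValE_symm_sn (n : ℕ) (v : Fin (2*n+1)) :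
    (ValE n v).symm (some none) = ⟨(v:ℕ), by omega⟩ := by
  ext
  simp only [ValE, Equiv.symm_trans_apply, ← Equiv.optionCongr_symm,
    Equiv.optionCongr_apply, Option.map_some, finSuccEquiv'_symm_none,
    finSuccEquiv'_symm_some, finCongr_symm, finCongr_apply, Fin.coe_cast]
  rw [succAbove_val]
  have := v.isLt
  simp only [Fin.coe_castSucc, Fin.val_last]
  split <;> omega

lemma ValE_symm_ss (n : ℕ) (v : Fin (2*n+1)) (x : Fin (2*n+1)) :
    (ValE n v).symm (some (some x)) =
      ⟨if (x:ℕ) < (v:ℕ) then (x:ℕ) else (x:ℕ)+1, by split <;> omega⟩ := by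
  ext
  simp only [ValE, Equiv.symm_trans_apply, ← Equiv.optionCongr_symm,
    Equiv.optionCongr_apply, Option.map_some, finSuccEquiv'_symm_some,
    finCongr_symm, finCongr_apply, Fin.coe_cast]
  rw [succAbove_val, succAbove_val]
  have := v.isLt
  have := x.isLt
  simp only [Fin.coe_castSucc, Fin.val_last]
  split_ifs <;> omega
noncomputable def Fmap (n : ℕ) (v : Fin (2*n+1)) (τ : Equiv.Perm (Fin (2*n+1))) :
    Equiv.Perm (Fin (2*(n+1)+1)) :=
  (PosE n).trans ((Equiv.optionCongr (Equiv.optionCongr τ)).trans (ValE n v).symm)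

lemma Fmap_zero (n : ℕ) (v : Fin (2*n+1)) (τ : Equiv.Perm (Fin (2*n+1))) :
    Fmap n v τ ⟨0, by omega⟩ = ⟨2*n+2, by omega⟩ := by
  have h0 : PosE n ⟨0, by omega⟩ = none := by
    rw [← PosE_symm_none n, Equiv.apply_symm_apply]
  simp only [Fmap, Equiv.trans_apply]
  rw [h0]
  simp only [Equiv.optionCongr_apply, Option.map_none]
  exact ValE_symm_none n v

lemma Fmap_one (n : ℕ) (v : Fin (2*n+1)) (τ : Equiv.Perm (Fin (2*n+1))) :
    Fmap n v τ ⟨1, by omega⟩ = ⟨(v:ℕ), by omega⟩ := by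
  have h0 : PosE n ⟨1, by omega⟩ = some none := by
    rw [← PosE_symm_sn n, Equiv.apply_symm_apply]
  simp only [Fmap, Equiv.trans_apply]
  rw [h0]
  simp only [Equiv.optionCongr_apply, Option.map_some, Option.map_none]
  exact ValE_symm_sn n v

lemma Fmap_two (n : ℕ) (v : Fin (2*n+1)) (τ : Equiv.Perm (Fin (2*n+1))) (i : Fin (2*n+1)) :
    Fmap n v τ ⟨(i:ℕ)+2, by omega⟩ =
      ⟨if (τ i : ℕ) < (v:ℕ) then (τ i : ℕ) else (τ i : ℕ)+1, by split <;> omega⟩ := by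
  have h0 : PosE n ⟨(i:ℕ)+2, by omega⟩ = some (some i) := by
    rw [← PosE_symm_ss n i, Equiv.apply_symm_apply]
  simp only [Fmap, Equiv.trans_apply]
  rw [h0]
  simp only [Equiv.optionCongr_apply, Option.map_some]
  exact ValE_symm_ss n v (τ i)

lemma good_intro {n : ℕ} {σ : Equiv.Perm (Fin (2*n+1))}
    (H : ∀ (a b c : Fin (2*n+1)) (k : ℕ), k < n → (a:ℕ)=2*k+1 → (b:ℕ)=2*k+2 → (c:ℕ)=2*k →
      σ a < σ b ∧ σ b < σ c) : Good n σ :=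
  fun k hk => H _ _ _ k hk rfl rfl rfl

lemma Good.get {n : ℕ} {σ : Equiv.Perm (Fin (2*n+1))} (h : Good n σ)
    {a b c : Fin (2*n+1)} (k : ℕ) (hk : k < n)
    (ha : (a:ℕ)=2*k+1) (hb : (b:ℕ)=2*k+2) (hc : (c:ℕ)=2*k) :
    σ a < σ b ∧ σ b < σ c := by
  rw [show a = ⟨2*k+1, by omega⟩ from Fin.ext ha,
      show b = ⟨2*k+2, by omega⟩ from Fin.ext hb,
      show c = ⟨2*k, by omega⟩ from Fin.ext hc]
  exact h k hk

lemma Fmap_zero' (n : ℕ) (v : Fin (2*n+1)) (τ : Equiv.Perm (Fin (2*n+1)))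
    (a : Fin (2*(n+1)+1)) (h : (a:ℕ) = 0) :
    Fmap n v τ a = ⟨2*n+2, by omega⟩ := by
  rw [show a = ⟨0, by omega⟩ from Fin.ext h]; exact Fmap_zero n v τ

lemma Fmap_one' (n : ℕ) (v : Fin (2*n+1)) (τ : Equiv.Perm (Fin (2*n+1)))
    (a : Fin (2*(n+1)+1)) (h : (a:ℕ) = 1) :
    Fmap n v τ a = ⟨(v:ℕ), by omega⟩ := by
  rw [show a = ⟨1, by omega⟩ from Fin.ext h]; exact Fmap_one n v τ

lemma Fmap_two' (n : ℕ) (v : Fin (2*n+1)) (τ : Equiv.Perm (Fin (2*n+1)))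
    (a : Fin (2*(n+1)+1)) (i : Fin (2*n+1)) (h : (a:ℕ) = (i:ℕ)+2) :
    Fmap n v τ a = ⟨if (τ i : ℕ) < (v:ℕ) then (τ i : ℕ) else (τ i : ℕ)+1, by split <;> omega⟩ := by
  rw [show a = ⟨(i:ℕ)+2, by omega⟩ from Fin.ext h]; exact Fmap_two n v τ i

lemma Fmap_good (n : ℕ) (v : Fin (2*n+1)) (τ : Equiv.Perm (Fin (2*n+1))) (hτ : Good n τ) :
    Good (n+1) (Fmap n v τ) := by
  apply good_intro
  intro a b c k hk ha hb hc
  have hv := v.isLt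
  rcases Nat.eq_zero_or_pos k with rfl | hkpos
  · have pf0 : (0:ℕ) < 2*n+1 := by omega
    rw [Fmap_one' n v τ a (by omega),
        Fmap_two' n v τ b ⟨0, pf0⟩ (by simpa using hb),
        Fmap_zero' n v τ c (by omega)]
    have hlast : (τ ⟨0, pf0⟩ : ℕ) = 2*n := hτ.apply_zero_eq_last
    constructor <;> simp only [Fin.mk_lt_mk] <;> split_ifs <;> omega
  · obtain ⟨m, rfl⟩ : ∃ m, k = m + 1 := ⟨k-1, by omega⟩
    have hmn : m < n := by omega
    have q0 : 2*m < 2*n+1 := by omega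
    have q1 : 2*m+1 < 2*n+1 := by omega
    have q2 : 2*m+2 < 2*n+1 := by omega
    obtain ⟨hg1, hg2⟩ := hτ.get (a := ⟨2*m+1, q1⟩) (b := ⟨2*m+2, q2⟩) (c := ⟨2*m, q0⟩)
      m hmn rfl rfl rfl
    rw [Fin.lt_def] at hg1 hg2
    rw [Fmap_two' n v τ a ⟨2*m+1, q1⟩ (by simpa using by omega : (a:ℕ) = 2*m+1+2),
        Fmap_two' n v τ b ⟨2*m+2, q2⟩ (by simpa using by omega : (b:ℕ) = 2*m+2+2),
        Fmap_two' n v τ c ⟨2*m, q0⟩ (by simpa using by omega : (c:ℕ) = 2*m+2)]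
    constructor <;> simp only [Fin.mk_lt_mk] <;> split_ifs <;> omega
lemma removeNone₂ {X : Type*} (E : Option (Option X) ≃ Option (Option X))
    (h0 : E none = none) (h1 : E (some none) = some none) (x : X) :
    E (some (some x)) = some (some (Equiv.removeNone (Equiv.removeNone E) x)) := by
  have k1 : ∀ y : Option X, ∃ z, E (some y) = some z := by
    intro y
    cases h : E (some y) with
    | none => exact absurd (E.injective (h.trans h0.symm)) (by simp)
    | some z => exact ⟨z, rfl⟩
  have r1 : ∀ y, some (Equiv.removeNone E y) = E (some y) :=
    fun y => Equiv.removeNone_some E (k1 y)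
  have e1 : Equiv.removeNone E none = none :=
    Option.some_injective _ ((r1 none).trans h1)
  have k2 : ∀ y : X, ∃ z, Equiv.removeNone E (some y) = some z := by
    intro y
    cases h : Equiv.removeNone E (some y) with
    | none => exact absurd ((Equiv.removeNone E).injective (h.trans e1.symm)) (by simp)
    | some z => exact ⟨z, rfl⟩
  have r2 : some (Equiv.removeNone (Equiv.removeNone E) x) = Equiv.removeNone E (some x) :=
    Equiv.removeNone_some _ (k2 x)
  rw [← r1 (some x), ← r2]

noncomputable def vG (n : ℕ) (σ : Equiv.Perm (Fin (2*(n+1)+1))) : Fin (2*n+1) :=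
  ⟨min ((σ ⟨1, by omega⟩ : Fin (2*(n+1)+1)) : ℕ) (2*n), by omega⟩

noncomputable def EG (n : ℕ) (σ : Equiv.Perm (Fin (2*(n+1)+1))) :
    Option (Option (Fin (2*n+1))) ≃ Option (Option (Fin (2*n+1))) :=
  ((PosE n).symm.trans σ).trans (ValE n (vG n σ))

noncomputable def τG (n : ℕ) (σ : Equiv.Perm (Fin (2*(n+1)+1))) : Equiv.Perm (Fin (2*n+1)) :=
  Equiv.removeNone (Equiv.removeNone (EG n σ))

/-- facts about a Good permutation of odd length 2n+3 -/
lemma Good.val_one_le {n : ℕ} {σ : Equiv.Perm (Fin (2*(n+1)+1))} (h : Good (n+1) σ) :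
    (σ ⟨1, by omega⟩ : ℕ) ≤ 2*n := by
  obtain ⟨h1, h2⟩ := h.get (a := ⟨1, by omega⟩) (b := ⟨2, by omega⟩) (c := ⟨0, by omega⟩)
    0 (by omega) (by simp) (by simp) (by simp)
  have h0 : (σ ⟨0, by omega⟩ : ℕ) = 2*(n+1) := h.apply_zero_eq_last
  rw [Fin.lt_def] at h1 h2
  omega

lemma Good.vG_val {n : ℕ} {σ : Equiv.Perm (Fin (2*(n+1)+1))} (h : Good (n+1) σ) :
    ((vG n σ : Fin (2*n+1)) : ℕ) = (σ ⟨1, by omega⟩ : ℕ) := by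
  have := h.val_one_le
  simp only [vG]
  omega

lemma Good.EG_none {n : ℕ} {σ : Equiv.Perm (Fin (2*(n+1)+1))} (h : Good (n+1) σ) :
    EG n σ none = none := by
  have h0 : σ ⟨0, by omega⟩ = ⟨2*n+2, by omega⟩ := by
    apply Fin.ext
    have := h.apply_zero_eq_last
    show (σ ⟨0, by omega⟩ : ℕ) = 2*n+2
    omega
  simp only [EG, Equiv.trans_apply, PosE_symm_none, h0]
  rw [show (⟨2*n+2, by omega⟩ : Fin (2*(n+1)+1)) = (ValE n (vG n σ)).symm none from
    (ValE_symm_none n _).symm]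
  exact Equiv.apply_symm_apply _ _

lemma Good.EG_sn {n : ℕ} {σ : Equiv.Perm (Fin (2*(n+1)+1))} (h : Good (n+1) σ) :
    EG n σ (some none) = some none := by
  have h1 : σ ⟨1, by omega⟩ = ⟨((vG n σ) : ℕ), by omega⟩ := Fin.ext h.vG_val.symm
  simp only [EG, Equiv.trans_apply, PosE_symm_sn, h1]
  rw [show (⟨((vG n σ) : ℕ), by omega⟩ : Fin (2*(n+1)+1)) = (ValE n (vG n σ)).symm (some none) from
    (ValE_symm_sn n _).symm]
  exact Equiv.apply_symm_apply _ _

lemma Good.EG_ss {n : ℕ} {σ : Equiv.Perm (Fin (2*(n+1)+1))} (h : Good (n+1) σ) (i : Fin (2*n+1)) :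
    EG n σ (some (some i)) = some (some (τG n σ i)) :=
  removeNone₂ _ h.EG_none h.EG_sn i

/-- value of σ at position i+2 in terms of τG -/
lemma Good.two_val {n : ℕ} {σ : Equiv.Perm (Fin (2*(n+1)+1))} (h : Good (n+1) σ)
    (a : Fin (2*(n+1)+1)) (i : Fin (2*n+1)) (ha : (a:ℕ) = (i:ℕ)+2) :
    σ a = ⟨if (τG n σ i : ℕ) < ((vG n σ):ℕ) then (τG n σ i : ℕ) else (τG n σ i : ℕ)+1,
      by split <;> omega⟩ := by
  have hE := h.EG_ss i
  simp only [EG, Equiv.trans_apply] at hE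
  rw [show a = ⟨(i:ℕ)+2, by omega⟩ from Fin.ext ha]
  rw [show (⟨(i:ℕ)+2, by omega⟩ : Fin (2*(n+1)+1)) = (PosE n).symm (some (some i)) from
    (PosE_symm_ss n i).symm]
  rw [← ValE_symm_ss n (vG n σ) (τG n σ i)]
  rw [← hE]
  exact (Equiv.symm_apply_apply _ _).symm
lemma Good.tauG_good {n : ℕ} {σ : Equiv.Perm (Fin (2*(n+1)+1))} (h : Good (n+1) σ) :
    Good n (τG n σ) := by
  apply good_intro
  intro a b c k hk ha hb hc
  have pA : (a:ℕ)+2 < 2*(n+1)+1 := by omega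
  have pB : (b:ℕ)+2 < 2*(n+1)+1 := by omega
  have pC : (c:ℕ)+2 < 2*(n+1)+1 := by omega
  obtain ⟨H1, H2⟩ := h.get (a := ⟨(a:ℕ)+2, pA⟩) (b := ⟨(b:ℕ)+2, pB⟩) (c := ⟨(c:ℕ)+2, pC⟩)
    (k+1) (by omega)
    (by show (a:ℕ)+2 = 2*(k+1)+1; omega)
    (by show (b:ℕ)+2 = 2*(k+1)+2; omega)
    (by show (c:ℕ)+2 = 2*(k+1); omega)
  have EA := h.two_val ⟨(a:ℕ)+2, pA⟩ a rfl
  have EB := h.two_val ⟨(b:ℕ)+2, pB⟩ b rfl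
  have EC := h.two_val ⟨(c:ℕ)+2, pC⟩ c rfl
  rw [EA, EB] at H1
  rw [EB, EC] at H2
  rw [Fin.mk_lt_mk] at H1 H2
  constructor <;> rw [Fin.lt_def] <;> (split_ifs at H1 H2 <;> omega)
lemma vG_Fmap (n : ℕ) (v : Fin (2*n+1)) (τ : Equiv.Perm (Fin (2*n+1))) :
    vG n (Fmap n v τ) = v := by
  have h1 := Fmap_one n v τ
  apply Fin.ext
  have hv := v.isLt
  simp only [vG, h1]
  show min ((⟨(v:ℕ), by omega⟩ : Fin (2*(n+1)+1)) : ℕ) (2*n) = (v:ℕ)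
  show min (v:ℕ) (2*n) = (v:ℕ)
  omega

lemma EG_Fmap (n : ℕ) (v : Fin (2*n+1)) (τ : Equiv.Perm (Fin (2*n+1))) :
    EG n (Fmap n v τ) = Equiv.optionCongr (Equiv.optionCongr τ) := by
  have hv := vG_Fmap n v τ
  apply Equiv.ext
  intro x
  rw [EG, Equiv.trans_apply, Equiv.trans_apply, hv, Fmap, Equiv.trans_apply,
    Equiv.trans_apply, Equiv.apply_symm_apply, Equiv.apply_symm_apply]

lemma tauG_Fmap (n : ℕ) (v : Fin (2*n+1)) (τ : Equiv.Perm (Fin (2*n+1))) :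
    τG n (Fmap n v τ) = τ := by
  rw [τG, EG_Fmap]
  simp

lemma Good.Fmap_inv {n : ℕ} {σ : Equiv.Perm (Fin (2*(n+1)+1))} (h : Good (n+1) σ) :
    Fmap n (vG n σ) (τG n σ) = σ := by
  apply Equiv.ext
  intro a
  have ha := a.isLt
  rcases Nat.lt_or_ge (a:ℕ) 2 with h2 | h2
  · rcases Nat.lt_or_ge (a:ℕ) 1 with h1 | h1
    · have h0 : (a:ℕ) = 0 := by omega
      rw [Fmap_zero' n _ _ a h0]
      have : σ a = ⟨2*n+2, by omega⟩ := by
        apply Fin.ext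
        rw [show a = ⟨0, by omega⟩ from Fin.ext h0]
        have := h.apply_zero_eq_last
        show (σ ⟨0, by omega⟩ : ℕ) = 2*n+2
        omega
      rw [this]
    · have h1' : (a:ℕ) = 1 := by omega
      rw [Fmap_one' n _ _ a h1']
      have : σ a = ⟨((vG n σ):ℕ), by omega⟩ := by
        apply Fin.ext
        rw [show a = ⟨1, by omega⟩ from Fin.ext h1']
        exact h.vG_val.symm
      rw [this]
  · set i : Fin (2*n+1) := ⟨(a:ℕ)-2, by omega⟩ with hi
    have hai : (a:ℕ) = (i:ℕ)+2 := by rw [hi]; show _ = (a:ℕ)-2+2; omega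
    rw [Fmap_two' n _ _ a i hai, h.two_val a i hai]
lemma GS_step (n : ℕ) : (GS (n+1)).card = (2*n+1) * (GS n).card := by
  classical
  have key : (GS (n+1)).card = ((Finset.univ : Finset (Fin (2*n+1))) ×ˢ GS n).card := by
    apply Finset.card_nbij' (i := fun σ => (vG n σ, τG n σ)) (j := fun p => Fmap n p.1 p.2)
    · intro σ hσ
      have hg : Good (n+1) σ := by simpa [GS] using hσ
      simp only [Finset.mem_coe, Finset.mem_product, Finset.mem_univ, true_and, GS, Finset.mem_filter]
      exact hg.tauG_good
    · intro p hp
      have hg : Good n p.2 := by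
        simp only [Finset.mem_coe, Finset.mem_product, GS, Finset.mem_filter] at hp
        exact hp.2.2
      simp only [Finset.mem_coe, GS, Finset.mem_filter, Finset.mem_univ, true_and]
      exact Fmap_good n p.1 p.2 hg
    · intro σ hσ
      have hg : Good (n+1) σ := by simpa [GS] using hσ
      exact hg.Fmap_inv
    · intro p hp
      exact Prod.ext (vG_Fmap n p.1 p.2) (tauG_Fmap n p.1 p.2)
  rw [key, Finset.card_product]
  simp

lemma GS_card (n : ℕ) : (GS n).card = Nat.doubleFactorial (2*n-1) := by
  induction n with
  | zero =>
    classical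
    have : GS 0 = Finset.univ := by
      ext σ
      simp only [GS, Finset.mem_filter, Finset.mem_univ, true_and, iff_true]
      intro k hk
      omega
    rw [this]
    simp [Finset.card_univ]
  | succ m ih =>
    rw [GS_step, ih]
    rcases Nat.eq_zero_or_pos m with rfl | hm
    · simp [Nat.doubleFactorial]
    · have e1 : 2*(m+1)-1 = (2*m-1)+2 := by omega
      rw [e1, Nat.doubleFactorial_add_two]
      have e2 : 2*m-1+2 = 2*m+1 := by omega
      rw [e2]
theorem stmt11 (n : ℕ) (hn : 1 ≤ n) :
    (∀ σ : Equiv.Perm (Fin (2 * n + 1)), IsDownUp σ → n ≤ mmp1000 σ) ∧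
    DcountEq n n = Nat.doubleFactorial (2 * n - 1) := by
  refine ⟨fun σ h => h.mmp_ge, ?_⟩
  rw [Dcount_eq_GS, GS_card]
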